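/- Let κ be an algebraically closed field of characteristic p > 0 and let n ≥ 1 be an integer. The Galois group of the polynomial X^(p^n) − X − x^(−1) over the field κ((x)) of formal Laurent series with coefficients in κ is isomorphic to the elementary abelian group (ℤ/pℤ)^n. -/

import Mathlib

open Polynomial IntermediateField


theorem aux_module (p n : ℕ) [Fact p.Prime] (A : Type*) [AddCommGroup A]
    [Module (ZMod p) A] [Fintype A] (hcard : Fintype.card A = p ^ n) :
    Nonempty (A ≃+ (Fin n → ZMod p)) := by
  haveI : Module.Finite (ZMod p) A := Module.Finite.of_finite
  have hd : Module.finrank (ZMod p) A = n := by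
    have b := Module.finBasis (ZMod p) A
    have h2 := Module.card_fintype b
    rw [ZMod.card, Fintype.card_fin] at h2
    exact Nat.pow_right_injective (Fact.out : p.Prime).two_le (h2.symm.trans hcard)
  exact ⟨(Module.finBasisOfFinrankEq _ _ hd).equivFun.toAddEquiv⟩

theorem aux_group (G : Type*) [CommGroup G] [Fintype G] (p n : ℕ) (hp : p.Prime)
    (hcard : Fintype.card G = p ^ n) (hexp : ∀ g : G, g ^ p = 1) :
    Nonempty (G ≃* (Fin n → Multiplicative (ZMod p))) := by
  haveI : Fact p.Prime := ⟨hp⟩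
  letI : Module (ZMod p) (Additive G) := AddCommGroup.zmodModule (by
    intro x
    show Additive.ofMul ((Additive.toMul x) ^ p) = 0
    rw [hexp]; rfl)
  have hG : Fintype.card (Additive G) = p ^ n :=
    (Fintype.card_congr (Additive.toMul (α := G))).trans hcard
  obtain ⟨e1⟩ := aux_module p n (Additive G) hG
  exact ⟨(AddEquiv.toMultiplicativeRight e1).trans (MulEquiv.piMultiplicative (fun _ : Fin n => ZMod p))⟩
set_option maxHeartbeats 1000000 in
theorem AS_gmap_irred (κ : Type*) [Field κ] (q : ℕ) (hq : 2 ≤ q) :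
    Irreducible (Polynomial.map (algebraMap (PowerSeries κ) (LaurentSeries κ))
      ((X : (PowerSeries κ)[X]) ^ q + C PowerSeries.X * X ^ (q - 1) - C PowerSeries.X)) := by
  set u : PowerSeries κ := PowerSeries.X with hu
  set g : (PowerSeries κ)[X] := X ^ q + C u * X ^ (q - 1) - C u with hg
  have hg' : g = X ^ q - (C u - C u * X ^ (q - 1)) := by ring
  have hdle : (C u - C u * X ^ (q - 1)).degree ≤ ((q - 1 : ℕ) : WithBot ℕ) := by
    apply le_trans (degree_sub_le _ _)
    rw [max_le_iff]
    exact ⟨le_trans degree_C_le (by exact_mod_cast Nat.zero_le (q-1)),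
      degree_C_mul_X_pow_le _ _⟩
  have hdlt : (C u - C u * X ^ (q - 1)).degree < (q : WithBot ℕ) :=
    lt_of_le_of_lt hdle (by exact_mod_cast Nat.sub_lt (by omega) one_pos)
  have hmon : g.Monic := by
    rw [hg']; exact monic_X_pow_sub hdlt
  have hdeg : g.natDegree = q := by
    have h2 : g.degree = (q : WithBot ℕ) := by
      rw [hg', degree_sub_eq_left_of_degree_lt (by rwa [degree_X_pow]), degree_X_pow]
    exact natDegree_eq_of_degree_eq_some h2
  have hcoeff : ∀ k, k < q → g.coeff k ∈ Ideal.span ({u} : Set (PowerSeries κ)) := by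
    intro k hk
    rw [hg]
    simp only [coeff_sub, coeff_add, coeff_X_pow, coeff_C, coeff_C_mul]
    rcases eq_or_ne k (q - 1) with rfl | h1
    · rw [if_neg (by omega : ¬ q - 1 = q), if_pos rfl, if_neg (by omega : ¬ q - 1 = 0)]
      simpa using Ideal.mem_span_singleton_self u
    · rw [if_neg (by omega : ¬ k = q), if_neg h1]
      rcases eq_or_ne k 0 with rfl | h0
      · rw [if_pos rfl]
        simpa using neg_mem (Ideal.mem_span_singleton_self u)
      · rw [if_neg h0]; simp
  have hc0 : g.coeff 0 = -u := by
    rw [hg]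
    simp only [coeff_sub, coeff_add, coeff_X_pow, coeff_C, coeff_C_mul,
      if_neg (by omega : ¬ (0:ℕ) = q), if_neg (by omega : ¬ (0:ℕ) = q - 1), if_pos rfl]
    simp
  have hEis : g.IsEisensteinAt (Ideal.span {u}) := by
    constructor
    · rw [hmon.leadingCoeff]
      intro h
      exact (PowerSeries.span_X_isPrime).ne_top (Ideal.eq_top_iff_one _ |>.2 h)
    · intro k hk
      exact hcoeff k (by omega)
    · rw [hc0, Ideal.span_singleton_pow]
      intro h
      rw [Ideal.neg_mem_iff, Ideal.mem_span_singleton] at h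
      rw [PowerSeries.X_pow_dvd_iff] at h
      have := h 1 one_lt_two
      rw [hu, PowerSeries.coeff_one_X] at this
      exact one_ne_zero this
  have hirr : Irreducible g :=
    hEis.irreducible PowerSeries.span_X_isPrime hmon.isPrimitive (by omega)
  exact (hmon.irreducible_iff_irreducible_map_fraction_map).mp hirr


set_option maxHeartbeats 1000000 in
theorem AS_f_irred (K : Type*) [Field K] (x : K) (hx0 : x ≠ 0) (q : ℕ) (hq : 2 ≤ q)
    (hgirr : Irreducible ((X : K[X]) ^ q + C x * X ^ (q - 1) - C x)) :
    Irreducible ((X : K[X]) ^ q - X - C x⁻¹) := by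
  set f : K[X] := X ^ q - X - C x⁻¹ with hf
  have hdle : ((X : K[X]) + C x⁻¹).degree < (q : WithBot ℕ) := by
    apply lt_of_le_of_lt (degree_add_le _ _)
    rw [max_lt_iff, degree_X]
    constructor
    · exact_mod_cast by omega
    · exact lt_of_le_of_lt degree_C_le (by exact_mod_cast by omega : (0 : WithBot ℕ) < q)
  have hf' : f = X ^ q - (X + C x⁻¹) := by rw [hf]; ring
  have hfmon : f.Monic := by rw [hf']; exact monic_X_pow_sub hdle
  have hfdeg : f.natDegree = q := by
    apply natDegree_eq_of_degree_eq_some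
    rw [hf', degree_sub_eq_left_of_degree_lt (by rwa [degree_X_pow]), degree_X_pow]
  set gK : K[X] := X ^ q + C x * X ^ (q - 1) - C x with hgK
  have hgK' : gK = X ^ q - (C x - C x * X ^ (q - 1)) := by rw [hgK]; ring
  have hdlt2 : (C x - C x * X ^ (q - 1)).degree < (q : WithBot ℕ) := by
    apply lt_of_le_of_lt (degree_sub_le _ _)
    rw [max_lt_iff]
    constructor
    · exact lt_of_le_of_lt degree_C_le (by exact_mod_cast by omega : (0 : WithBot ℕ) < q)
    · exact lt_of_le_of_lt (degree_C_mul_X_pow_le _ _) (by exact_mod_cast by omega)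
  have hgmon : gK.Monic := by rw [hgK']; exact monic_X_pow_sub hdlt2
  have hgdeg : gK.natDegree = q := by
    apply natDegree_eq_of_degree_eq_some
    rw [hgK', degree_sub_eq_left_of_degree_lt (by rwa [degree_X_pow]), degree_X_pow]
  -- root in algebraic closure
  set M := AlgebraicClosure K
  obtain ⟨β, hβroot⟩ := IsAlgClosed.exists_root (gK.map (algebraMap K M)) (by
    rw [degree_map, degree_eq_natDegree hgmon.ne_zero, hgdeg]
    exact_mod_cast by omega)
  have haeval : aeval β gK = 0 := by rwa [aeval_def, ← eval_map]
  set y : M := algebraMap K M x with hy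
  have hy0 : y ≠ 0 := fun h => hx0 ((map_eq_zero_iff _ (algebraMap K M).injective).mp h)
  have hroot : β ^ q + y * β ^ (q - 1) - y = 0 := by
    have h1 : aeval β ((X : K[X]) ^ q + C x * X ^ (q - 1) - C x) = 0 := haeval
    simpa only [map_sub, map_add, map_mul, map_pow, aeval_X, aeval_C] using h1
  have hβ0 : β ≠ 0 := by
    intro h
    rw [h] at hroot
    rw [zero_pow (by omega : q ≠ 0), zero_pow (by omega : q - 1 ≠ 0)] at hroot
    simp only [mul_zero, add_zero, zero_add, zero_sub, neg_eq_zero] at hroot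
    exact hy0 hroot
  have hβint : IsIntegral K β := (Algebra.IsAlgebraic.isAlgebraic β).isIntegral
  have hmin : minpoly K β = gK := (minpoly.eq_of_irreducible_of_monic hgirr haeval hgmon).symm
  set α : M := β⁻¹ with hα
  have hαint : IsIntegral K α := (Algebra.IsAlgebraic.isAlgebraic α).isIntegral
  obtain ⟨e, rfl⟩ : ∃ e, q = e + 2 := ⟨q - 2, by omega⟩
  have hfa : aeval α f = 0 := by
    have key : (α ^ (e + 2) - α - y⁻¹) * (β ^ (e + 2) * y) =
        -(β ^ (e + 2) + y * β ^ (e + 1) - y) := by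
      rw [hα]
      have h1 : β⁻¹ ^ (e + 2) * β ^ (e + 2) = 1 := by rw [inv_pow, inv_mul_cancel₀ (pow_ne_zero _ hβ0)]
      have h2 : β⁻¹ * β ^ (e + 2) = β ^ (e + 1) := by rw [pow_succ, ← mul_assoc, mul_comm β⁻¹, mul_assoc, inv_mul_cancel₀ hβ0, mul_one]
      have h3 : y⁻¹ * y = 1 := inv_mul_cancel₀ hy0
      linear_combination y * h1 - y * h2 - β ^ (e + 2) * h3
    have hprod : (α ^ (e + 2) - α - y⁻¹) * (β ^ (e + 2) * y) = 0 := by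
      rw [key]
      have h3 : β ^ (e + 2) + y * β ^ (e + 1) - y = 0 := hroot
      rw [h3, neg_zero]
    rcases mul_eq_zero.mp hprod with h | h
    · rw [hf]
      simp only [map_sub, map_pow, aeval_X, aeval_C, map_inv₀]
      rw [← hy]
      exact h
    · exact absurd h (mul_ne_zero (pow_ne_zero _ hβ0) hy0)
  have hadj : K⟮α⟯ = K⟮β⟯ := by
    apply le_antisymm
    · exact adjoin_simple_le_iff.2 (inv_mem (mem_adjoin_simple_self K β))
    · refine adjoin_simple_le_iff.2 ?_
      rw [show β = α⁻¹ by rw [hα, inv_inv]]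
      exact inv_mem (mem_adjoin_simple_self K α)
  have h1 : (minpoly K α).natDegree = e + 2 := by
    have r1 := IntermediateField.adjoin.finrank hαint
    have r2 := IntermediateField.adjoin.finrank hβint
    rw [hadj] at r1
    rw [← r1, r2, hmin, hgdeg]
  have hfeq : f = minpoly K α :=
    eq_of_monic_of_dvd_of_natDegree_le (minpoly.monic hαint) hfmon
      (minpoly.dvd K α hfa) (by rw [hfdeg, h1])
  rw [hfeq]
  exact minpoly.irreducible hαint
set_option maxHeartbeats 1000000 in
theorem AS_gal (K : Type*) [Field K] (p n : ℕ) (hp : p.Prime) [CharP K p] (hn : 1 ≤ n) (c : K)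
    (hirr : Irreducible ((X : K[X]) ^ (p ^ n) - X - C c))
    (hsplit : Splits ((X : K[X]) ^ (p ^ n) - X)) :
    Nonempty (((X : K[X]) ^ (p ^ n) - X - C c).Gal ≃* (Fin n → Multiplicative (ZMod p))) := by
  haveI : Fact p.Prime := ⟨hp⟩
  set q := p ^ n with hqdef
  have hq2 : 2 ≤ q := le_trans hp.two_le (Nat.le_self_pow (by omega) p)
  have hqK : ((q : ℕ) : K) = 0 := by
    rw [hqdef, Nat.cast_pow, CharP.cast_eq_zero K p, zero_pow (by omega : n ≠ 0)]
  set f : K[X] := X ^ q - X - C c with hf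
  -- monic / degree
  have hdle : ((X : K[X]) + C c).degree < (q : WithBot ℕ) := by
    apply lt_of_le_of_lt (degree_add_le _ _)
    rw [max_lt_iff, degree_X]
    exact ⟨by exact_mod_cast by omega,
      lt_of_le_of_lt degree_C_le (by exact_mod_cast by omega : (0 : WithBot ℕ) < q)⟩
  have hf' : f = X ^ q - (X + C c) := by rw [hf]; ring
  have hfmon : f.Monic := by rw [hf']; exact monic_X_pow_sub hdle
  have hfdeg : f.natDegree = q := by
    apply natDegree_eq_of_degree_eq_some
    rw [hf', degree_sub_eq_left_of_degree_lt (by rwa [degree_X_pow]), degree_X_pow]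
  -- separability
  have hfsep : f.Separable := by
    rw [separable_def]
    have hder : derivative f = -1 := by
      rw [hf]
      simp [derivative_X_pow, hqK]
    rw [hder]
    exact ⟨0, -1, by ring⟩
  -- the constants polynomial
  set g : K[X] := X ^ q - X with hg
  have hgmon : g.Monic := by
    rw [hg]
    apply monic_X_pow_sub
    rw [degree_X]
    exact_mod_cast by omega
  have hgdeg : g.natDegree = q := by
    apply natDegree_eq_of_degree_eq_some
    rw [hg, degree_sub_eq_left_of_degree_lt
      (by rw [degree_X_pow, degree_X]; exact_mod_cast by omega), degree_X_pow]
  have hgsep : g.Separable := by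
    rw [separable_def]
    have hder : derivative g = -1 := by
      rw [hg]
      simp [derivative_X_pow, hqK]
    rw [hder]
    exact ⟨0, -1, by ring⟩
  set L := f.SplittingField with hL
  haveI : CharP L p := charP_of_injective_ringHom (algebraMap K L).injective p
  -- a root of f in L
  have hfL : Splits (f.map (algebraMap K L)) := SplittingField.splits f
  obtain ⟨a, ha⟩ : ∃ a : L, aeval a f = 0 := by
    obtain ⟨a, ha⟩ := hfL.exists_eval_eq_zero
      (by rw [degree_map, degree_eq_natDegree hfmon.ne_zero, hfdeg]; exact_mod_cast by omega)
    exact ⟨a, by rw [aeval_def, ← eval_map]; exact ha⟩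
  -- g splits over K and L with q distinct roots
  have hgsplitL : Splits (g.map (algebraMap K L)) := by
    exact hsplit.map _
  have hcardK : Fintype.card (g.rootSet K) = q := by
    rw [card_rootSet_eq_natDegree hgsep
      (by rw [Algebra.algebraMap_self, Polynomial.map_id]; exact hsplit : Splits (g.map (algebraMap K K))), hgdeg]
  have hcardL : Fintype.card (g.rootSet L) = q := by
    rw [card_rootSet_eq_natDegree hgsep hgsplitL, hgdeg]
  -- every solution of d^q = d in L comes from K
  have hconst : ∀ d : L, d ^ q = d → ∃ k : K, algebraMap K L k = d := by
    intro d hd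
    have hdmem : d ∈ g.rootSet L := by
      rw [mem_rootSet]
      refine ⟨hgmon.ne_zero, ?_⟩
      rw [hg]
      simp only [map_sub, map_pow, aeval_X]
      rw [hd, sub_self]
    set ψ : g.rootSet K → g.rootSet L := fun k => ⟨algebraMap K L k.1, by
      have hk := k.2
      rw [mem_rootSet] at hk ⊢
      exact ⟨hk.1, by rw [aeval_algebraMap_apply, hk.2, map_zero]⟩⟩ with hψ
    have hψinj : Function.Injective ψ := by
      intro x y hxy
      apply Subtype.ext
      exact (algebraMap K L).injective (congrArg Subtype.val hxy)
    have hψsurj : Function.Surjective ψ :=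
      ((Fintype.bijective_iff_injective_and_card ψ).mpr ⟨hψinj, by rw [hcardK, hcardL]⟩).2
    obtain ⟨k, hk⟩ := hψsurj ⟨d, hdmem⟩
    exact ⟨k.1, congrArg Subtype.val hk⟩
  -- root differences satisfy d^q = d
  have hc' : ∀ b : L, aeval b f = 0 → b ^ q - b - algebraMap K L c = 0 := by
    intro b hb
    have hb' : (aeval b) ((X : K[X]) ^ q - X - C c) = 0 := hb
    simpa only [map_sub, map_pow, aeval_X, aeval_C] using hb'
  have hdiff : ∀ b b' : L, aeval b f = 0 → aeval b' f = 0 → (b - b') ^ q = b - b' := by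
    intro b b' hb hb'
    have e1 := hc' b hb
    have e2 := hc' b' hb'
    show (b - b') ^ (p ^ n) = b - b'
    rw [sub_pow_char_pow]
    have e1' : b ^ (p ^ n) - b - algebraMap K L c = 0 := e1
    have e2' : b' ^ (p ^ n) - b' - algebraMap K L c = 0 := e2
    linear_combination e1' - e2'
  -- Galois action on the root a
  have hφroot : ∀ σ : f.Gal, aeval (σ a) f = 0 := by
    intro σ
    have h := aeval_algHom_apply σ.toAlgHom a f
    rw [ha, map_zero] at h
    exact h
  have hkey : ∀ σ : f.Gal, ∃ k : K, algebraMap K L k = σ a - a :=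
    fun σ => hconst _ (hdiff _ _ (hφroot σ) ha)
  -- Galois elements are determined by their value at a
  have hfne : f ≠ 0 := hfmon.ne_zero
  have hdet : ∀ σ τ : f.Gal, σ a = τ a → σ = τ := by
    intro σ τ hστ
    apply Polynomial.Gal.ext
    intro b hb
    rw [mem_rootSet] at hb
    obtain ⟨k, hk⟩ := hconst (b - a) (hdiff b a hb.2 ha)
    have hb' : b = a + algebraMap K L k := by rw [hk]; ring
    have e1 : σ (algebraMap K L k) = algebraMap K L k := σ.commutes k
    have e2 : τ (algebraMap K L k) = algebraMap K L k := τ.commutes k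
    rw [hb', map_add, map_add]
    linear_combination hστ + e1 - e2
  -- the homomorphism into (L, +)
  have hhom : ∀ σ τ : f.Gal, (σ * τ) a - a = (σ a - a) + (τ a - a) := by
    intro σ τ
    obtain ⟨k, hk⟩ := hkey τ
    have h1 : (σ * τ) a = σ (τ a) := rfl
    have h2 : τ a = a + algebraMap K L k := by rw [hk]; ring
    have e1 : σ (algebraMap K L k) = algebraMap K L k := σ.commutes k
    rw [h1, h2, map_add]
    linear_combination e1
  set F : f.Gal →* Multiplicative L := MonoidHom.mk'
    (fun σ => Multiplicative.ofAdd (σ a - a))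
    (fun σ τ => by rw [← ofAdd_add]; exact congrArg _ (hhom σ τ)) with hF
  have hFinj : Function.Injective F := by
    rw [injective_iff_map_eq_one]
    intro σ hσ
    have h1 : σ a - a = 0 := hσ
    exact hdet σ 1 (by rw [show (1 : f.Gal) a = a from rfl]; exact sub_eq_zero.mp h1)
  -- cardinality: upper bound
  have hle : Fintype.card f.Gal ≤ q := by
    have hmem : ∀ σ : f.Gal, σ a - a ∈ g.rootSet L := by
      intro σ
      rw [mem_rootSet]
      refine ⟨hgmon.ne_zero, ?_⟩
      rw [hg]
      simp only [map_sub, map_pow, aeval_X]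
      rw [hdiff _ _ (hφroot σ) ha, sub_self]
    have := Fintype.card_le_of_injective (fun σ : f.Gal => (⟨σ a - a, hmem σ⟩ : g.rootSet L))
      (by
        intro σ τ h
        have h2 : σ a - a = τ a - a := congrArg Subtype.val h
        exact hdet σ τ (by linear_combination h2))
    rwa [hcardL] at this
  -- cardinality: lower bound
  have haint : IsIntegral K a := ⟨f, hfmon, by rw [← aeval_def]; exact ha⟩
  have hminp : minpoly K a = f := (minpoly.eq_of_irreducible_of_monic hirr ha hfmon).symm
  have hadjfinrank : Module.finrank K K⟮a⟯ = q := by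
    rw [IntermediateField.adjoin.finrank haint, hminp, hfdeg]
  have hge : q ≤ Module.finrank K L := by
    have htower := Module.finrank_mul_finrank K K⟮a⟯ L
    have hpos : 0 < Module.finrank K⟮a⟯ L := Module.finrank_pos
    calc q = q * 1 := (mul_one q).symm
    _ ≤ q * Module.finrank K⟮a⟯ L := by exact Nat.mul_le_mul_left _ hpos
    _ = Module.finrank K L := by rw [← hadjfinrank, htower]
  have hcard : Fintype.card f.Gal = q := by
    apply le_antisymm hle
    rw [← Nat.card_eq_fintype_card, Polynomial.Gal.card_of_separable hfsep]
    exact hge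
  -- exponent p
  have hexp : ∀ σ : f.Gal, σ ^ p = 1 := by
    intro σ
    apply hFinj
    rw [map_pow, map_one]
    show (Multiplicative.ofAdd (σ a - a)) ^ p = Multiplicative.ofAdd (0 : L)
    rw [← ofAdd_nsmul]
    congr 1
    rw [nsmul_eq_mul, CharP.cast_eq_zero L p, zero_mul]
  -- pass to the range, a commutative group
  let e : f.Gal ≃* F.range := MonoidHom.ofInjective hFinj
  haveI : Fintype F.range := Fintype.ofEquiv _ e.toEquiv
  have hcard' : Fintype.card F.range = p ^ n := by
    rw [← Fintype.card_congr e.toEquiv, hcard]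
  have hexp' : ∀ h : F.range, h ^ p = 1 := by
    rintro ⟨x, hx⟩
    obtain ⟨σ, rfl⟩ := hx
    have hFp : F σ ^ p = 1 := by rw [← map_pow, hexp, map_one]
    apply Subtype.ext
    rw [SubmonoidClass.coe_pow]
    exact hFp
  obtain ⟨e2⟩ := aux_group F.range p n hp hcard' hexp'
  exact ⟨e.trans e2⟩

/-- Over the Laurent series field `κ((x))` with `κ` algebraically closed of
characteristic `p > 0`, the Galois group of `X^(p^n) - X - x⁻¹` is `(ℤ/pℤ)^n`. -/
theorem gal_artinSchreier_laurentSeries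
    (κ : Type*) [Field κ] [IsAlgClosed κ] (p : ℕ) (hp : p.Prime) [CharP κ p]
    (n : ℕ) (hn : 1 ≤ n) :
    Nonempty
      ((Polynomial.X ^ (p ^ n) - Polynomial.X -
          Polynomial.C ((HahnSeries.single (1 : ℤ) (1 : κ) : LaurentSeries κ)⁻¹)).Gal ≃*
        (Fin n → Multiplicative (ZMod p))) := by
  set K := LaurentSeries κ with hK
  haveI : CharP K p := charP_of_injective_ringHom (algebraMap κ K).injective p
  set q := p ^ n with hq
  have hq2 : 2 ≤ q := le_trans hp.two_le (Nat.le_self_pow (by omega) p)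
  set x : K := HahnSeries.single (1 : ℤ) (1 : κ) with hx
  have hx0 : x ≠ 0 := HahnSeries.single_ne_zero one_ne_zero
  have halg : algebraMap (PowerSeries κ) K PowerSeries.X = x := by
    rw [LaurentSeries.coe_algebraMap]; exact HahnSeries.ofPowerSeries_X
  have hmapg : Polynomial.map (algebraMap (PowerSeries κ) K)
      ((X : (PowerSeries κ)[X]) ^ q + C PowerSeries.X * X ^ (q - 1) - C PowerSeries.X) =
      (X : K[X]) ^ q + C x * X ^ (q - 1) - C x := by
    simp [Polynomial.map_sub, Polynomial.map_add, Polynomial.map_pow, Polynomial.map_mul, halg]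
  have hgirr : Irreducible ((X : K[X]) ^ q + C x * X ^ (q - 1) - C x) :=
    hmapg ▸ AS_gmap_irred κ q hq2
  have hirr : Irreducible ((X : K[X]) ^ q - X - C x⁻¹) := AS_f_irred K x hx0 q hq2 hgirr
  have hsplit : Splits ((X : K[X]) ^ q - X) := by
    have h0 : Splits (((X : κ[X]) ^ q - X).map (algebraMap κ K)) := IsAlgClosed.splits_domain _
    have h1 : ((X : κ[X]) ^ q - X).map (algebraMap κ K) = (X : K[X]) ^ q - X := by
      simp [Polynomial.map_sub, Polynomial.map_pow]
    rw [← h1]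
    exact h0
  exact AS_gal K p n hp hn x⁻¹ hirr hsplit
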